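/- Let X be finite, p a probability distribution on X (not necessarily full support), π_θ a differentiable family of distributions with π_θ(x) > 0 for all x and θ, and f:(0,∞)→ℝ convex differentiable with f(1)=0 such that f'(∞) := lim_{t→0⁺} t·f(1/t) is finite. Then ∇_θ [ Σ_{x: p(x)>0} p(x)·f(π_θ(x)/p(x)) + f'(∞)·π_θ({p=0}) ] = Σ_{x: p(x)>0} π_θ(x)·f'(π_θ(x)/p(x))·∇_θ log π_θ(x) + Σ_{x: p(x)=0} π_θ(x)·f'(∞)·∇_θ log π_θ(x). -/

import Mathlib

open Filter Topology

theorem stmt_11 {d : ℕ} {X : Type*} [Fintype X] [DecidableEq X]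
    (p : X → ℝ) (hpnn : ∀ x, 0 ≤ p x) (hpsum : ∑ x, p x = 1)
    (π : (Fin d → ℝ) → X → ℝ)
    (hpos : ∀ θ x, 0 < π θ x)
    (hdiff : ∀ x, Differentiable ℝ (fun θ => π θ x))
    (hπsum : ∀ θ, ∑ x, π θ x = 1)
    (f : ℝ → ℝ) (hf : ConvexOn ℝ (Set.Ioi (0:ℝ)) f)
    (hfd : DifferentiableOn ℝ f (Set.Ioi (0:ℝ))) (hf1 : f 1 = 0)
    (c : ℝ) (hc : Tendsto (fun t : ℝ => t * f (1 / t)) (𝓝[>] (0:ℝ)) (nhds c))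
    (θ : Fin d → ℝ) :
    fderiv ℝ (fun θ' =>
        (∑ x ∈ Finset.univ.filter (fun x => 0 < p x), p x * f (π θ' x / p x))
          + c * ∑ x ∈ Finset.univ.filter (fun x => p x = 0), π θ' x) θ
      = (∑ x ∈ Finset.univ.filter (fun x => 0 < p x),
            (π θ x * deriv f (π θ x / p x)) • fderiv ℝ (fun θ' => Real.log (π θ' x)) θ)
        + ∑ x ∈ Finset.univ.filter (fun x => p x = 0),
            (π θ x * c) • fderiv ℝ (fun θ' => Real.log (π θ' x)) θ := by
  classical
  set D : X → (Fin d → ℝ) →L[ℝ] ℝ := fun x => fderiv ℝ (fun θ' => π θ' x) θ with hD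
  have hlog : ∀ x, fderiv ℝ (fun θ' => Real.log (π θ' x)) θ = (π θ x)⁻¹ • D x := by
    intro x
    exact (((hdiff x) θ).hasFDerivAt.log (ne_of_gt (hpos θ x))).fderiv
  have hterm : ∀ x ∈ Finset.univ.filter (fun x => 0 < p x),
      HasFDerivAt (fun θ' => p x * f (π θ' x / p x)) (deriv f (π θ x / p x) • D x) θ := by
    intro x hx
    simp only [Finset.mem_filter] at hx
    have hpx : p x ≠ 0 := ne_of_gt hx.2
    have h1 : HasFDerivAt (fun θ' => π θ' x / p x) ((p x)⁻¹ • D x) θ := by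
      simpa [div_eq_inv_mul] using ((hdiff x) θ).hasFDerivAt.fun_const_smul (p x)⁻¹
    have hu : (0:ℝ) < π θ x / p x := div_pos (hpos θ x) hx.2
    have hfa : DifferentiableAt ℝ f (π θ x / p x) :=
      hfd.differentiableAt (isOpen_Ioi.mem_nhds hu)
    have h3 := (hfa.hasDerivAt.comp_hasFDerivAt θ h1).const_mul (p x)
    have : (p x) • (deriv f (π θ x / p x) • ((p x)⁻¹ • D x))
        = deriv f (π θ x / p x) • D x := by
      rw [smul_smul, smul_smul]
      congr 1
      field_simp
    rwa [this] at h3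
  have hsum1 : HasFDerivAt
      (fun θ' => ∑ x ∈ Finset.univ.filter (fun x => 0 < p x), p x * f (π θ' x / p x))
      (∑ x ∈ Finset.univ.filter (fun x => 0 < p x), deriv f (π θ x / p x) • D x) θ :=
    HasFDerivAt.fun_sum hterm
  have hsum2 : HasFDerivAt
      (fun θ' => c * ∑ x ∈ Finset.univ.filter (fun x => p x = 0), π θ' x)
      (∑ x ∈ Finset.univ.filter (fun x => p x = 0), c • D x) θ := by
    have h := (HasFDerivAt.sum (fun x (_ : x ∈ Finset.univ.filter (fun x => p x = 0)) =>
      ((hdiff x) θ).hasFDerivAt)).const_mul c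
    simpa [Finset.smul_sum] using h
  rw [(hsum1.fun_add hsum2).fderiv]
  congr 1
  · apply Finset.sum_congr rfl
    intro x hx
    rw [hlog x, smul_smul]
    congr 1
    field_simp [ne_of_gt (hpos θ x)]
  · apply Finset.sum_congr rfl
    intro x hx
    rw [hlog x, smul_smul]
    congr 1
    field_simp [ne_of_gt (hpos θ x)]
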